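/- Let W, X be Riesz spaces with X Dedekind complete, let B : W → X be a regular operator, and let w ∈ W⁺. Then the net of sums ∑_{i=1}^n |B w_i|, indexed over finite positive partitions (w_i)_{i=1}^n of w (i.e., w_i ≥ 0 and ∑ w_i = w), directed upward by refinement, increases to |B|w; in particular |B|w = sup { ∑_{i=1}^n |B w_i| : n ∈ ℕ, w_i ≥ 0, ∑ w_i = w }. -/

import Mathlib

open Set Filter

namespace TwoSided

section Defs

variable {E F : Type*}
  [AddCommGroup E] [Lattice E] [Module ℝ E]
  [AddCommGroup F] [Lattice F] [Module ℝ F]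

/-- A linear operator between ordered vector spaces is positive if it maps the
positive cone into the positive cone. -/
def Positive (T : E →ₗ[ℝ] F) : Prop := ∀ x : E, 0 ≤ x → 0 ≤ T x

/-- A regular operator is a difference of two positive operators. -/
def IsRegular (T : E →ₗ[ℝ] F) : Prop :=
  ∃ P Q : E →ₗ[ℝ] F, Positive P ∧ Positive Q ∧ T = P - Q

/-- `U` is the supremum of `S` and `T` in the operator order. -/
def IsOpSup (S T U : E →ₗ[ℝ] F) : Prop :=
  Positive (U - S) ∧ Positive (U - T) ∧
    ∀ V : E →ₗ[ℝ] F, Positive (V - S) → Positive (V - T) → Positive (V - U)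

/-- `U` is the infimum of `S` and `T` in the operator order. -/
def IsOpInf (S T U : E →ₗ[ℝ] F) : Prop :=
  Positive (S - U) ∧ Positive (T - U) ∧
    ∀ V : E →ₗ[ℝ] F, Positive (S - V) → Positive (T - V) → Positive (U - V)

/-- `U` is the least upper bound of the set `s` of operators in the operator order. -/
def IsOpLUB (s : Set (E →ₗ[ℝ] F)) (U : E →ₗ[ℝ] F) : Prop :=
  (∀ C ∈ s, Positive (U - C)) ∧
    ∀ V : E →ₗ[ℝ] F, (∀ C ∈ s, Positive (V - C)) → Positive (V - U)

/-- `M` is the modulus `|T| = T ⊔ (-T)` of the operator `T`. -/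
def IsModulus (T M : E →ₗ[ℝ] F) : Prop := IsOpSup T (-T) M

/-- An operator is order continuous if it maps nets decreasing to `0`
to nets order converging to `0`. -/
def OrdContinuous (T : E →ₗ[ℝ] F) : Prop :=
  ∀ (ι : Type) [SemilatticeSup ι] [Nonempty ι] (a : ι → E),
    Antitone a → IsGLB (Set.range a) 0 →
      ∃ b : ι → F, Antitone b ∧ IsGLB (Set.range b) 0 ∧
        ∀ i, T (a i) ≤ b i ∧ -(T (a i)) ≤ b i

/-- A lattice is Dedekind complete if every nonempty set bounded above has a
least upper bound. -/
def DedekindComplete (G : Type*) [Preorder G] : Prop :=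
  ∀ s : Set G, s.Nonempty → BddAbove s → ∃ a, IsLUB s a

end Defs

section Two

variable {W X Y Z : Type*}
  [AddCommGroup W] [Lattice W] [Module ℝ W]
  [AddCommGroup X] [Lattice X] [Module ℝ X]
  [AddCommGroup Y] [Lattice Y] [Module ℝ Y]
  [AddCommGroup Z] [Lattice Z] [Module ℝ Z]

/-- The two-sided multiplication operator `T ↦ A ∘ T ∘ B`. -/
def MAB (A : Y →ₗ[ℝ] Z) (B : W →ₗ[ℝ] X) :
    (X →ₗ[ℝ] Y) →ₗ[ℝ] (W →ₗ[ℝ] Z) where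
  toFun T := A ∘ₗ T ∘ₗ B
  map_add' := by intro S T; ext w; simp
  map_smul' := by intro c T; ext w; simp

/-- Positivity for operators between spaces of operators, with respect to the
operator order. -/
def Positive2 (Φ : (X →ₗ[ℝ] Y) →ₗ[ℝ] (W →ₗ[ℝ] Z)) : Prop :=
  ∀ T : X →ₗ[ℝ] Y, Positive T → Positive (Φ T)

def IsRegular2 (Φ : (X →ₗ[ℝ] Y) →ₗ[ℝ] (W →ₗ[ℝ] Z)) : Prop :=
  ∃ Φ₁ Φ₂, Positive2 (W := W) (X := X) (Y := Y) (Z := Z) Φ₁ ∧ Positive2 Φ₂ ∧ Φ = Φ₁ - Φ₂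

def IsOpSup2 (Φ Ψ Θ : (X →ₗ[ℝ] Y) →ₗ[ℝ] (W →ₗ[ℝ] Z)) : Prop :=
  Positive2 (Θ - Φ) ∧ Positive2 (Θ - Ψ) ∧
    ∀ Ξ : (X →ₗ[ℝ] Y) →ₗ[ℝ] (W →ₗ[ℝ] Z),
      Positive2 (Ξ - Φ) → Positive2 (Ξ - Ψ) → Positive2 (Ξ - Θ)

def IsOpInf2 (Φ Ψ Θ : (X →ₗ[ℝ] Y) →ₗ[ℝ] (W →ₗ[ℝ] Z)) : Prop :=
  Positive2 (Φ - Θ) ∧ Positive2 (Ψ - Θ) ∧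
    ∀ Ξ : (X →ₗ[ℝ] Y) →ₗ[ℝ] (W →ₗ[ℝ] Z),
      Positive2 (Φ - Ξ) → Positive2 (Ψ - Ξ) → Positive2 (Θ - Ξ)

def IsModulus2 (Φ M : (X →ₗ[ℝ] Y) →ₗ[ℝ] (W →ₗ[ℝ] Z)) : Prop := IsOpSup2 Φ (-Φ) M

end Two

end TwoSided



namespace RKaux

/-- A lattice-ordered commutative group is an `OrderedAddCommGroup`. -/
def oacg {G : Type*} [AddCommGroup G] [Lattice G]
    [CovariantClass G G (· + ·) (· ≤ ·)] : IsOrderedAddMonoid G :=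
  { add_le_add_left := fun _ _ h c => add_le_add_left h c }

section Group

variable {G : Type*} [AddCommGroup G] [Lattice G] [CovariantClass G G (· + ·) (· ≤ ·)]

lemma riesz2 {z a b : G} (hz : 0 ≤ z) (h : z ≤ a + b) (ha : 0 ≤ a) (hb : 0 ≤ b) :
    ∃ z1 z2, 0 ≤ z1 ∧ z1 ≤ a ∧ 0 ≤ z2 ∧ z2 ≤ b ∧ z1 + z2 = z := by
  refine ⟨z ⊓ a, z - z ⊓ a, le_inf hz ha, inf_le_right,
    sub_nonneg.mpr inf_le_left, ?_, by abel⟩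
  rw [sub_inf, sub_self]
  exact sup_le hb (sub_le_iff_le_add'.mpr h)

lemma split_le_sum : ∀ (n : ℕ) (v : Fin n → G), (∀ j, 0 ≤ v j) → ∀ a : G, 0 ≤ a →
    a ≤ ∑ j, v j → ∃ u : Fin n → G, (∀ j, 0 ≤ u j) ∧ (∀ j, u j ≤ v j) ∧ ∑ j, u j = a
  | 0, v, _, a, ha, hle => by
      refine ⟨fun j => j.elim0, fun j => j.elim0, fun j => j.elim0, ?_⟩
      simp only [Finset.univ_eq_empty, Finset.sum_empty] at hle ⊢
      exact (le_antisymm hle ha).symm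
  | (n+1), v, hv, a, ha, hle => by
      rw [Fin.sum_univ_succ] at hle
      letI := oacg (G := G)
      obtain ⟨z1, z2, hz1, hz1le, hz2, hz2le, hsum⟩ :=
        riesz2 ha hle (hv 0) (Finset.sum_nonneg fun j _ => hv j.succ)
      obtain ⟨u', hu'0, hu'le, hu'sum⟩ :=
        split_le_sum n (fun j => v j.succ) (fun j => hv j.succ) z2 hz2 hz2le
      refine ⟨Fin.cases z1 u', ?_, ?_, ?_⟩
      · intro j
        refine Fin.cases ?_ ?_ j
        · simpa using hz1
        · intro i; simpa using hu'0 i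
      · intro j
        refine Fin.cases ?_ ?_ j
        · simpa using hz1le
        · intro i; simpa using hu'le i
      · rw [Fin.sum_univ_succ]
        simpa [hu'sum] using hsum

lemma decomp_pair {n : ℕ} {u : Fin n → G} (hu : ∀ i, 0 ≤ u i) {x y : G}
    (hx : 0 ≤ x) (hy : 0 ≤ y) (hsum : ∑ i, u i = x + y) :
    ∃ a b : Fin n → G, (∀ i, 0 ≤ a i) ∧ (∀ i, 0 ≤ b i) ∧ (∀ i, a i + b i = u i) ∧
      ∑ i, a i = x ∧ ∑ i, b i = y := by
  obtain ⟨a, ha0, hale, hasum⟩ :=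
    split_le_sum n u hu x hx (hsum ▸ le_add_of_nonneg_right hy)
  refine ⟨a, fun i => u i - a i, ha0, fun i => sub_nonneg.mpr (hale i),
    fun i => add_sub_cancel _ _, hasum, ?_⟩
  rw [Finset.sum_sub_distrib, hasum, hsum]
  abel

lemma refine_matrix : ∀ (n : ℕ) (wv : Fin n → G) (m : ℕ) (v : Fin m → G),
    (∀ i, 0 ≤ wv i) → (∀ j, 0 ≤ v j) → ∑ i, wv i = ∑ j, v j →
    ∃ u : Fin n → Fin m → G, (∀ i j, 0 ≤ u i j) ∧ (∀ i, ∑ j, u i j = wv i) ∧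
      (∀ j, ∑ i, u i j = v j)
  | 0, wv, m, v, _, hv, hsum => by
      letI := oacg (G := G)
      refine ⟨fun i => i.elim0, fun i => i.elim0, fun i => i.elim0, fun j => ?_⟩
      have h0 : ∑ j, v j = 0 := by simpa using hsum.symm
      have hj : v j ≤ 0 := h0 ▸ Finset.single_le_sum (fun i _ => hv i) (Finset.mem_univ j)
      simpa using (le_antisymm hj (hv j)).symm
  | (n+1), wv, m, v, hw, hv, hsum => by
      letI := oacg (G := G)
      have h0le : wv 0 ≤ ∑ j, v j := by
        rw [← hsum, Fin.sum_univ_succ]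
        exact le_add_of_nonneg_right (Finset.sum_nonneg fun i _ => hw i.succ)
      obtain ⟨r, hr0, hrle, hrsum⟩ := split_le_sum m v hv (wv 0) (hw 0) h0le
      obtain ⟨u', hu'0, hu'row, hu'col⟩ := refine_matrix n (fun i => wv i.succ) m
        (fun j => v j - r j) (fun i => hw i.succ) (fun j => sub_nonneg.mpr (hrle j))
        (by rw [Finset.sum_sub_distrib, hrsum, ← hsum, Fin.sum_univ_succ]; abel)
      refine ⟨Fin.cases r u', ?_, ?_, ?_⟩
      · intro i
        refine Fin.cases ?_ ?_ i
        · intro j; simpa using hr0 j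
        · intro i' j; simpa using hu'0 i' j
      · intro i
        refine Fin.cases ?_ ?_ i
        · simpa using hrsum
        · intro i'; simpa using hu'row i'
      · intro j
        rw [Fin.sum_univ_succ]
        simp only [Fin.cases_zero, Fin.cases_succ]
        rw [hu'col j]
        abel

lemma abs_sum_le' : ∀ (n : ℕ) (f : Fin n → G), |∑ i, f i| ≤ ∑ i, |f i|
  | 0, f => by simp
  | (n+1), f => by
      letI := oacg (G := G)
      rw [Fin.sum_univ_succ, Fin.sum_univ_succ (f := fun i => |f i|)]
      exact (abs_add_le _ _).trans (add_le_add_right (abs_sum_le' n fun i => f i.succ) _)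

lemma sum_prod_eq {n m : ℕ} (g : Fin n → Fin m → G) :
    ∑ k : Fin (n * m), g (finProdFinEquiv.symm k).1 (finProdFinEquiv.symm k).2
      = ∑ i, ∑ j, g i j :=
  (Equiv.sum_comp finProdFinEquiv.symm (fun p => g p.1 p.2)).trans
    (Fintype.sum_prod_type (f := fun p => g p.1 p.2))

end Group

section Module

variable {M : Type*} [AddCommGroup M] [Lattice M] [CovariantClass M M (· + ·) (· ≤ ·)]
  [Module ℝ M] [PosSMulMono ℝ M]

lemma smul_sup' {c : ℝ} (hc : 0 < c) (a b : M) : c • (a ⊔ b) = (c • a) ⊔ (c • b) := by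
  refine le_antisymm ?_ (sup_le (smul_le_smul_of_nonneg_left le_sup_left hc.le)
    (smul_le_smul_of_nonneg_left le_sup_right hc.le))
  have h1 : a ≤ c⁻¹ • ((c • a) ⊔ (c • b)) := by
    have := smul_le_smul_of_nonneg_left
      (le_sup_left : c • a ≤ (c • a) ⊔ (c • b)) (inv_nonneg.mpr hc.le)
    rwa [smul_smul, inv_mul_cancel₀ hc.ne', one_smul] at this
  have h2 : b ≤ c⁻¹ • ((c • a) ⊔ (c • b)) := by
    have := smul_le_smul_of_nonneg_left
      (le_sup_right : c • b ≤ (c • a) ⊔ (c • b)) (inv_nonneg.mpr hc.le)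
    rwa [smul_smul, inv_mul_cancel₀ hc.ne', one_smul] at this
  have h3 := smul_le_smul_of_nonneg_left (sup_le h1 h2) hc.le
  rwa [smul_smul, mul_inv_cancel₀ hc.ne', one_smul] at h3

lemma abs_smul' {c : ℝ} (hc : 0 ≤ c) (v : M) : |c • v| = c • |v| := by
  rcases hc.eq_or_lt with h | h
  · simp [← h]
  · show (c • v) ⊔ -(c • v) = c • (v ⊔ -v)
    rw [smul_sup' h, smul_neg]

lemma isLUB_smul_image {c : ℝ} (hc : 0 < c) {s : Set M} {a : M} (h : IsLUB s a) :
    IsLUB ((c • ·) '' s) (c • a) := by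
  constructor
  · rintro _ ⟨x, hx, rfl⟩
    exact smul_le_smul_of_nonneg_left (h.1 hx) hc.le
  · intro b hb
    have hub : c⁻¹ • b ∈ upperBounds s := by
      intro x hx
      have h1 : c • x ≤ b := hb ⟨x, hx, rfl⟩
      have h2 := smul_le_smul_of_nonneg_left h1 (inv_nonneg.mpr hc.le)
      rwa [smul_smul, inv_mul_cancel₀ hc.ne', one_smul] at h2
    have h3 := smul_le_smul_of_nonneg_left (h.2 hub) hc.le
    rwa [smul_smul, mul_inv_cancel₀ hc.ne', one_smul] at h3

end Module

end RKaux

open TwoSided in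
theorem statement8 {W X : Type*}
    [AddCommGroup W] [Lattice W] [CovariantClass W W (· + ·) (· ≤ ·)]
    [Module ℝ W] [PosSMulMono ℝ W]
    [AddCommGroup X] [Lattice X] [CovariantClass X X (· + ·) (· ≤ ·)]
    [Module ℝ X] [PosSMulMono ℝ X]
    (hX : DedekindComplete X)
    (B : W →ₗ[ℝ] X) (hB : IsRegular B)
    (absB : W →ₗ[ℝ] X) (habsB : IsModulus B absB)
    (w : W) (hw : 0 ≤ w) :
    DirectedOn (· ≤ ·)
      { v : X | ∃ (n : ℕ) (wi : Fin n → W),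
        (∀ i, 0 ≤ wi i) ∧ (∑ i, wi i = w) ∧ v = ∑ i, |B (wi i)| } ∧
    IsLUB
      { v : X | ∃ (n : ℕ) (wi : Fin n → W),
        (∀ i, 0 ≤ wi i) ∧ (∑ i, wi i = w) ∧ v = ∑ i, |B (wi i)| }
      (absB w) := by
  classical
  letI := RKaux.oacg (G := W)
  letI := RKaux.oacg (G := X)
  let S : W → Set X := fun x => { v : X | ∃ (n : ℕ) (wi : Fin n → W),
    (∀ i, 0 ≤ wi i) ∧ (∑ i, wi i = x) ∧ v = ∑ i, |B (wi i)| }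
  show DirectedOn (· ≤ ·) (S w) ∧ IsLUB (S w) (absB w)
  have habs : ∀ x : X, |x| = x ⊔ -x := fun _ => rfl
  have hmemself : ∀ x : W, 0 ≤ x → |B x| ∈ S x := fun x hx =>
    ⟨1, fun _ => x, fun _ => hx, by simp, by simp⟩
  have hne : ∀ x : W, 0 ≤ x → (S x).Nonempty := fun x hx => ⟨_, hmemself x hx⟩
  have hBle : ∀ u : W, 0 ≤ u → |B u| ≤ absB u := by
    intro u hu
    have h1 : (0 : X) ≤ (absB - B) u := habsB.1 u hu
    have h2 : (0 : X) ≤ (absB - -B) u := habsB.2.1 u hu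
    rw [LinearMap.sub_apply] at h1
    rw [LinearMap.sub_apply, LinearMap.neg_apply] at h2
    rw [habs]
    exact sup_le (sub_nonneg.mp h1) (sub_nonneg.mp h2)
  have hub : ∀ x : W, ∀ v ∈ S x, v ≤ absB x := by
    rintro x v ⟨n, wi, hwi, hsum, rfl⟩
    calc ∑ i, |B (wi i)| ≤ ∑ i, absB (wi i) :=
          Finset.sum_le_sum fun i _ => hBle _ (hwi i)
      _ = absB x := by rw [← map_sum, hsum]
  have hLUBex : ∀ x : W, 0 ≤ x → ∃ a, IsLUB (S x) a :=
    fun x hx => hX _ (hne x hx) ⟨absB x, fun v hv => hub x v hv⟩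
  let U₀ : W → X := fun x => if h : 0 ≤ x then (hLUBex x h).choose else 0
  have hU₀ : ∀ x, (hx : 0 ≤ x) → IsLUB (S x) (U₀ x) := by
    intro x hx
    show IsLUB (S x) (if h : 0 ≤ x then (hLUBex x h).choose else 0)
    rw [dif_pos hx]
    exact (hLUBex x hx).choose_spec
  have hconcat : ∀ {x y : W} {p q : X}, p ∈ S x → q ∈ S y → p + q ∈ S (x + y) := by
    rintro x y p q ⟨n, wi, hwi, hsw, rfl⟩ ⟨m, vj, hvj, hsv, rfl⟩
    refine ⟨n + m, Fin.append wi vj, ?_, ?_, ?_⟩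
    · intro k
      refine Fin.addCases (fun i => ?_) (fun j => ?_) k
      · simpa using hwi i
      · simpa using hvj j
    · rw [Fin.sum_univ_add]
      simp [hsw, hsv]
    · rw [Fin.sum_univ_add]
      simp
  have hadd₀ : ∀ {x y : W}, 0 ≤ x → 0 ≤ y → U₀ (x + y) = U₀ x + U₀ y := by
    intro x y hx hy
    have hxy : (0:W) ≤ x + y := add_nonneg hx hy
    refine (hU₀ _ hxy).unique ?_
    constructor
    · rintro v ⟨n, ui, hui, hsum, rfl⟩
      obtain ⟨a, b, ha0, hb0, hab, hsa, hsb⟩ := RKaux.decomp_pair hui hx hy hsum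
      have h1 : ∑ i, |B (ui i)| ≤ ∑ i, (|B (a i)| + |B (b i)|) := by
        refine Finset.sum_le_sum fun i _ => ?_
        rw [← hab i, map_add]
        exact abs_add_le _ _
      rw [Finset.sum_add_distrib] at h1
      refine h1.trans (add_le_add ?_ ?_)
      · exact (hU₀ x hx).1 ⟨n, a, ha0, hsa, rfl⟩
      · exact (hU₀ y hy).1 ⟨n, b, hb0, hsb, rfl⟩
    · intro c hc
      have h2 : ∀ q ∈ S y, q ≤ c - U₀ x := by
        intro q hq
        have h1 : U₀ x ≤ c - q := by
          refine (hU₀ x hx).2 ?_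
          intro p hp
          rw [le_sub_iff_add_le]
          exact hc (hconcat hp hq)
        rwa [le_sub_iff_add_le, add_comm, ← le_sub_iff_add_le] at h1
      have h3 := (hU₀ y hy).2 h2
      rwa [le_sub_iff_add_le, add_comm] at h3
  have hU₀zero : U₀ 0 = 0 := by
    refine (hU₀ 0 le_rfl).unique ?_
    constructor
    · rintro v ⟨n, wi, hwi, hsum, rfl⟩
      have hz : ∀ i, wi i = 0 := by
        intro i
        refine le_antisymm (hsum ▸ ?_) (hwi i)
        exact Finset.single_le_sum (fun j _ => hwi j) (Finset.mem_univ i)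
      simp [hz]
    · intro c hc
      exact hc ⟨0, fun i => i.elim0, fun i => i.elim0, by simp, by simp⟩
  have hsmul₀ : ∀ (c : ℝ), 0 ≤ c → ∀ x : W, 0 ≤ x → U₀ (c • x) = c • U₀ x := by
    intro c hc x hx
    rcases hc.eq_or_lt with rfl | hc'
    · simp [hU₀zero]
    · have hcx : (0:W) ≤ c • x := smul_nonneg hc'.le hx
      refine (hU₀ _ hcx).unique ?_
      have himg : S (c • x) = (c • ·) '' (S x) := by
        ext v
        constructor
        · rintro ⟨n, wi, hwi, hsum, rfl⟩
          refine ⟨∑ i, |B (c⁻¹ • wi i)|, ⟨n, fun i => c⁻¹ • wi i,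
            fun i => smul_nonneg (inv_nonneg.mpr hc'.le) (hwi i), ?_, rfl⟩, ?_⟩
          · rw [← Finset.smul_sum, hsum, smul_smul, inv_mul_cancel₀ hc'.ne', one_smul]
          · show c • (∑ i, |B (c⁻¹ • wi i)|) = ∑ i, |B (wi i)|
            rw [Finset.smul_sum]
            refine Finset.sum_congr rfl fun i _ => ?_
            rw [← RKaux.abs_smul' hc'.le, ← map_smul, smul_smul,
              mul_inv_cancel₀ hc'.ne', one_smul]
        · rintro ⟨v', ⟨n, wi, hwi, hsum, rfl⟩, rfl⟩
          refine ⟨n, fun i => c • wi i, fun i => smul_nonneg hc'.le (hwi i), ?_, ?_⟩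
          · rw [← Finset.smul_sum, hsum]
          · show c • (∑ i, |B (wi i)|) = ∑ i, |B (c • wi i)|
            rw [Finset.smul_sum]
            exact Finset.sum_congr rfl fun i _ => by
              rw [map_smul, RKaux.abs_smul' hc'.le]
      rw [himg]
      exact RKaux.isLUB_smul_image hc' (hU₀ x hx)
  have hwd : ∀ (a b a' b' : W), 0 ≤ a → 0 ≤ b → 0 ≤ a' → 0 ≤ b' → a - b = a' - b' →
      U₀ a - U₀ b = U₀ a' - U₀ b' := by
    intro a b a' b' ha hb ha' hb' h
    have h2 : a + b' = a' + b := by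
      have h1 : a - b + (b + b') = a' - b' + (b + b') := by rw [h]
      calc a + b' = a - b + (b + b') := by abel
        _ = a' - b' + (b + b') := h1
        _ = a' + b := by abel
    have h3 : U₀ a + U₀ b' = U₀ a' + U₀ b := by
      rw [← hadd₀ ha hb', ← hadd₀ ha' hb, h2]
    calc U₀ a - U₀ b = (U₀ a + U₀ b') - (U₀ b' + U₀ b) := by abel
      _ = (U₀ a' + U₀ b) - (U₀ b' + U₀ b) := by rw [h3]
      _ = U₀ a' - U₀ b' := by abel
  have hposnn : ∀ x : W, (0:W) ≤ x ⊔ 0 := fun x => le_sup_right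
  have hdecomp : ∀ x : W, (x ⊔ 0) - ((-x) ⊔ 0) = x := by
    intro x
    have h : x + ((-x) ⊔ 0) = 0 ⊔ x := by rw [add_sup]; simp [sup_comm]
    rw [sub_eq_iff_eq_add, h, sup_comm]
  have hf : ∀ (x a b : W), 0 ≤ a → 0 ≤ b → x = a - b →
      U₀ (x ⊔ 0) - U₀ ((-x) ⊔ 0) = U₀ a - U₀ b := by
    intro x a b ha hb hx
    exact hwd _ _ _ _ (hposnn x) (hposnn (-x)) ha hb (by rw [hdecomp, hx])
  let U : W →ₗ[ℝ] X :=
    { toFun := fun x => U₀ (x ⊔ 0) - U₀ ((-x) ⊔ 0)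
      map_add' := by
        intro x y
        have hxy : x + y = ((x ⊔ 0) + (y ⊔ 0)) - (((-x) ⊔ 0) + ((-y) ⊔ 0)) := by
          rw [show ((x ⊔ 0) + (y ⊔ 0)) - (((-x) ⊔ 0) + ((-y) ⊔ 0))
              = ((x ⊔ 0) - ((-x) ⊔ 0)) + ((y ⊔ 0) - ((-y) ⊔ 0)) from by abel,
            hdecomp, hdecomp]
        show U₀ ((x + y) ⊔ 0) - U₀ ((-(x + y)) ⊔ 0) = _
        rw [hf (x + y) _ _ (add_nonneg (hposnn x) (hposnn y))
            (add_nonneg (hposnn (-x)) (hposnn (-y))) hxy,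
          hadd₀ (hposnn x) (hposnn y), hadd₀ (hposnn (-x)) (hposnn (-y))]
        abel
      map_smul' := by
        intro c x
        show U₀ ((c • x) ⊔ 0) - U₀ ((-(c • x)) ⊔ 0)
          = (RingHom.id ℝ) c • (U₀ (x ⊔ 0) - U₀ ((-x) ⊔ 0))
        rw [RingHom.id_apply]
        rcases le_or_gt 0 c with hc | hc
        · rw [hf (c • x) (c • (x ⊔ 0)) (c • ((-x) ⊔ 0)) (smul_nonneg hc (hposnn x))
            (smul_nonneg hc (hposnn (-x))) (by rw [← smul_sub, hdecomp]),
            hsmul₀ c hc _ (hposnn x), hsmul₀ c hc _ (hposnn (-x)), smul_sub]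
        · have hneg : c • x = ((-c) • ((-x) ⊔ 0)) - ((-c) • (x ⊔ 0)) := by
            rw [← smul_sub]
            have h1 := hdecomp (-x)
            rw [neg_neg] at h1
            rw [h1, neg_smul, smul_neg, neg_neg]
          rw [hf (c • x) _ _ (smul_nonneg (neg_nonneg.mpr hc.le) (hposnn (-x)))
              (smul_nonneg (neg_nonneg.mpr hc.le) (hposnn x)) hneg,
            hsmul₀ (-c) (neg_nonneg.mpr hc.le) _ (hposnn (-x)),
            hsmul₀ (-c) (neg_nonneg.mpr hc.le) _ (hposnn x), neg_smul, neg_smul, smul_sub]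
          abel }
  have hUpos : ∀ x : W, 0 ≤ x → U x = U₀ x := by
    intro x hx
    show U₀ (x ⊔ 0) - U₀ ((-x) ⊔ 0) = U₀ x
    rw [hf x x 0 hx le_rfl (by rw [sub_zero]), hU₀zero, sub_zero]
  have hUB : Positive (U - B) := by
    intro x hx
    rw [LinearMap.sub_apply, hUpos x hx]
    refine sub_nonneg.mpr ((le_abs_self _).trans ?_)
    exact (hU₀ x hx).1 (hmemself x hx)
  have hUB' : Positive (U - -B) := by
    intro x hx
    rw [LinearMap.sub_apply, LinearMap.neg_apply, hUpos x hx]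
    refine sub_nonneg.mpr ((neg_le_abs _).trans ?_)
    exact (hU₀ x hx).1 (hmemself x hx)
  have hle : absB w ≤ U₀ w := by
    have h1 := habsB.2.2 U hUB hUB' w hw
    rw [LinearMap.sub_apply, hUpos w hw] at h1
    exact sub_nonneg.mp h1
  constructor
  · rintro p ⟨n, wi, hwi, hsw, rfl⟩ q ⟨m, vj, hvj, hsv, rfl⟩
    obtain ⟨u, hu0, hurow, hucol⟩ :=
      RKaux.refine_matrix n wi m vj hwi hvj (by rw [hsw, hsv])
    refine ⟨∑ i, ∑ j, |B (u i j)|,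
      ⟨n * m, fun k => u (finProdFinEquiv.symm k).1 (finProdFinEquiv.symm k).2,
        fun k => hu0 _ _, ?_, ?_⟩, ?_, ?_⟩
    · calc ∑ k : Fin (n * m), u (finProdFinEquiv.symm k).1 (finProdFinEquiv.symm k).2
          = ∑ i, ∑ j, u i j := RKaux.sum_prod_eq u
        _ = ∑ i, wi i := Finset.sum_congr rfl fun i _ => hurow i
        _ = w := hsw
    · exact (RKaux.sum_prod_eq fun i j => |B (u i j)|).symm
    · refine Finset.sum_le_sum fun i _ => ?_
      rw [← hurow i, map_sum]
      exact RKaux.abs_sum_le' m _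
    · rw [Finset.sum_comm]
      refine Finset.sum_le_sum fun j _ => ?_
      rw [← hucol j, map_sum]
      exact RKaux.abs_sum_le' n _
  · constructor
    · intro v hv
      exact hub w v hv
    · intro c hc
      exact hle.trans ((hU₀ w hw).2 hc)
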